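/- If every R-module is S-strongly flat, then every S-weakly cotorsion R-module is injective, and conversely. -/

import Mathlib

open CategoryTheory

universe u

variable (R : Type u) [CommRing R]

/-- `Ext^n_R(M, N) = 0`. -/
def extVanish (n : ℕ) (M N : Type u) [AddCommGroup M] [Module R M]
    [AddCommGroup N] [Module R N] : Prop :=
  Subsingleton (((Ext R (ModuleCat.{u} R) n).obj
    (Opposite.op (ModuleCat.of R M))).obj (ModuleCat.of R N))

/-- `C` is `S`-weakly cotorsion if `Ext^1_R(R_S, C) = 0`. -/
def IsWeaklyCotorsion (S : Submonoid R) (C : Type u) [AddCommGroup C] [Module R C] : Prop :=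
  extVanish R 1 (Localization S) C

/-- `F` is `S`-strongly flat if `Ext^1_R(F, C) = 0` for all `S`-weakly cotorsion `C`. -/
def IsStronglyFlat (S : Submonoid R) (F : Type u) [AddCommGroup F] [Module R F] : Prop :=
  ∀ (C : Type u) [AddCommGroup C] [Module R C], IsWeaklyCotorsion R S C → extVanish R 1 F C

section Aux
open CategoryTheory Limits
lemma subsingleton_iff_isZero (M : ModuleCat.{u} R) : Subsingleton M ↔ IsZero M := by
  constructor
  · intro h; exact ModuleCat.isZero_of_subsingleton M
  · intro h
    refine ⟨fun a b => ?_⟩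
    have : (𝟙 M : M ⟶ M) = 0 := by
      rw [← IsZero.iff_id_eq_zero] ; exact h
    calc a = (𝟙 M : M ⟶ M) a := rfl
    _ = (0 : M ⟶ M) a := by rw [this]
    _ = (𝟙 M : M ⟶ M) b := by rw [this]; rfl
    _ = b := rfl

lemma ext_one_vanish_iff (M C : ModuleCat.{u} R) (P : ProjectiveResolution M) :
    Subsingleton (((Ext R (ModuleCat.{u} R) 1).obj (Opposite.op M)).obj C) ↔
    ∀ (φ : P.complex.X 1 ⟶ C), P.complex.d 2 1 ≫ φ = 0 →
      ∃ ψ : P.complex.X 0 ⟶ C, P.complex.d 1 0 ≫ ψ = φ := by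
  have e := P.isoExt (R := R) 1 C
  rw [subsingleton_iff_isZero]
  rw [show IsZero (((Ext R (ModuleCat.{u} R) 1).obj (Opposite.op M)).obj C) ↔ IsZero ((P.complex.linearYonedaObj R C).homology 1) from ⟨fun h => IsZero.of_iso h e.symm, fun h => IsZero.of_iso h e⟩, ← HomologicalComplex.exactAt_iff_isZero_homology]
  rw [HomologicalComplex.exactAt_iff' _ 0 1 2 (by simp) (by simp)]
  rw [ShortComplex.moduleCat_exact_iff]
  have hd : ∀ (i j : ℕ) (χ : P.complex.X i ⟶ C),
      (P.complex.linearYonedaObj R C).d i j χ = P.complex.d j i ≫ χ := by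
    intro i j χ
    rw [ChainComplex.linearYonedaObj_d]
    rfl
  constructor
  · intro h φ hφ
    obtain ⟨ψ, hψ⟩ := h φ (by
      have h2 : (P.complex.linearYonedaObj R C).d 1 2 φ = 0 := hφ
      rw [hd 1 2 φ] at h2
      exact h2)
    refine ⟨ψ, ?_⟩
    show (P.complex.linearYonedaObj R C).d 0 1 ψ = φ
    rw [hd 0 1 ψ]
    exact hψ
  · intro h φ hφ
    have h2 : (P.complex.linearYonedaObj R C).d 1 2 φ = 0 := hφ
    rw [hd 1 2 φ] at h2
    obtain ⟨ψ, hψ⟩ := h φ h2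
    refine ⟨ψ, ?_⟩
    show (P.complex.linearYonedaObj R C).d 0 1 ψ = φ
    rw [hd 0 1 ψ]
    exact hψ

lemma cond_of_injective (C : ModuleCat.{u} R) (hC : Module.Injective R C)
    {M : ModuleCat.{u} R} (P : ProjectiveResolution M)
    (φ : P.complex.X 1 ⟶ C) (hφ : P.complex.d 2 1 ≫ φ = 0) :
    ∃ ψ : P.complex.X 0 ⟶ C, P.complex.d 1 0 ≫ ψ = φ := by
  have hexact := (P.exact_succ 0).moduleCat_range_eq_ker
  -- range (d 2 1) = ker (d 1 0)
  set d1 : P.complex.X 1 →ₗ[R] P.complex.X 0 := (P.complex.d 1 0).hom with hd1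
  have hker : LinearMap.ker d1 ≤ LinearMap.ker (φ.hom : P.complex.X 1 →ₗ[R] C) := by
    intro x hx
    rw [← hexact] at hx
    obtain ⟨y, hy⟩ := hx
    have h5 : φ (P.complex.d 2 1 y) = 0 := by
      have h6 := congr_arg (fun m : P.complex.X 2 ⟶ C => m y) hφ
      simpa using h6
    show φ x = 0
    rw [← hy]
    exact h5
  let q : (P.complex.X 1 ⧸ LinearMap.ker d1) →ₗ[R] C := Submodule.liftQ _ _ hker
  let e := LinearMap.quotKerEquivRange d1
  let g : LinearMap.range d1 →ₗ[R] C := q ∘ₗ (e.symm : _ →ₗ[R] _)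
  obtain ⟨h, hh⟩ := hC.out (LinearMap.range d1).subtype Subtype.val_injective g
  refine ⟨ModuleCat.ofHom h, ?_⟩
  ext x
  have hx : d1 x ∈ LinearMap.range d1 := ⟨x, rfl⟩
  show h (d1 x) = φ x
  have h2 : h (d1 x) = h ((LinearMap.range d1).subtype ⟨d1 x, hx⟩) := rfl
  rw [h2, hh]
  show q (e.symm ⟨d1 x, hx⟩) = φ x
  have h3 : e.symm ⟨d1 x, hx⟩ = Submodule.Quotient.mk x := by
    rw [LinearEquiv.symm_apply_eq]
    ext
    simp [e, LinearMap.quotKerEquivRange_apply_mk]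
  rw [h3]
  rfl

lemma baer_of_cond (C : ModuleCat.{u} R)
    (hext : ∀ (M : ModuleCat.{u} R) (P : ProjectiveResolution M)
      (φ : P.complex.X 1 ⟶ C), P.complex.d 2 1 ≫ φ = 0 →
      ∃ ψ : P.complex.X 0 ⟶ C, P.complex.d 1 0 ≫ ψ = φ) :
    Module.Baer R C := by
  intro I g
  let M : ModuleCat.{u} R := ModuleCat.of R (R ⧸ I)
  obtain ⟨P⟩ := (inferInstance : HasProjectiveResolution M).out
  let π : P.complex.X 0 ⟶ M := P.π.f 0
  have hπs : Function.Surjective π := by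
    rw [← ModuleCat.epi_iff_surjective]
    exact (inferInstance : Epi (P.π.f 0))
  have hex : LinearMap.range (P.complex.d 1 0).hom = LinearMap.ker (π.hom : _ →ₗ[R] _) := by
    have := ShortComplex.exact_of_g_is_cokernel
      (S := ShortComplex.mk (P.complex.d 1 0) π P.complex_d_comp_π_f_zero)
      P.isColimitCokernelCofork
    exact this.moduleCat_range_eq_ker
  have hmkQepi : Epi (ModuleCat.ofHom I.mkQ : ModuleCat.of R R ⟶ M) :=
    (ModuleCat.epi_iff_surjective _).mpr (Submodule.mkQ_surjective I)
  let h0 : P.complex.X 0 ⟶ ModuleCat.of R R :=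
    Projective.factorThru π (ModuleCat.ofHom I.mkQ)
  let h0' : (P.complex.X 0 : Type u) →ₗ[R] R := h0.hom
  have hh0 : ∀ x, I.mkQ (h0' x) = π x := by
    intro x
    exact congr_arg (fun m : P.complex.X 0 ⟶ M => m x)
      (Projective.factorThru_comp π (ModuleCat.ofHom I.mkQ))
  obtain ⟨p, hp⟩ := hπs (I.mkQ 1)
  let f0' : R →ₗ[R] (P.complex.X 0 : Type u) := LinearMap.toSpanSingleton R _ p
  let f0 : ModuleCat.of R R ⟶ P.complex.X 0 := ModuleCat.ofHom f0'
  have hf0 : ∀ r : R, π (f0' r) = I.mkQ r := by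
    intro r
    show π (r • p) = I.mkQ r
    rw [map_smul, hp]
    rw [show r • I.mkQ 1 = I.mkQ (r • (1:R)) from (map_smul I.mkQ r 1).symm]
    rw [smul_eq_mul, mul_one]
  have hmem : ∀ x : P.complex.X 1, h0' (P.complex.d 1 0 x) ∈ I := by
    intro x
    have h1 : π (P.complex.d 1 0 x) = 0 := by
      have h2 := congr_arg (fun m : P.complex.X 1 ⟶ M => m x) P.complex_d_comp_π_f_zero
      exact h2
    have h2 : I.mkQ (h0' (P.complex.d 1 0 x)) = 0 := by rw [hh0, h1]
    rwa [← Submodule.ker_mkQ I]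
  let u : (P.complex.X 1 : Type u) →ₗ[R] I :=
    LinearMap.codRestrict I (h0' ∘ₗ (P.complex.d 1 0).hom) hmem
  let φ : P.complex.X 1 ⟶ C := ModuleCat.ofHom (g ∘ₗ u)
  have hφ : P.complex.d 2 1 ≫ φ = 0 := by
    ext x
    show g (u (P.complex.d 2 1 x)) = 0
    have hdd : P.complex.d 1 0 (P.complex.d 2 1 x) = 0 := by
      have h3 := congr_arg (fun m : P.complex.X 2 ⟶ P.complex.X 0 => m x)
        (P.complex.d_comp_d 2 1 0)
      exact h3
    have hu0 : u (P.complex.d 2 1 x) = 0 := by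
      apply Subtype.ext
      show h0' (P.complex.d 1 0 (P.complex.d 2 1 x)) = 0
      rw [hdd, map_zero]
    rw [hu0, map_zero]
  obtain ⟨ψ, hψ⟩ := hext M P φ hφ
  have hψx : ∀ x, ψ (P.complex.d 1 0 x) = g (u x) := by
    intro x
    exact congr_arg (fun m : P.complex.X 1 ⟶ C => m x) hψ
  have hτmem : ∀ r : R, h0' (f0' r) - r ∈ I := by
    intro r
    have h4 : I.mkQ (h0' (f0' r) - r) = 0 := by
      rw [map_sub, hh0, hf0, sub_self]
    rwa [← Submodule.ker_mkQ I]
  let τ : R →ₗ[R] I := LinearMap.codRestrict I (h0' ∘ₗ f0' - LinearMap.id) hτmem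
  let ψ' : (P.complex.X 0 : Type u) →ₗ[R] C := ψ.hom
  refine ⟨ψ' ∘ₗ f0' - g ∘ₗ τ, ?_⟩
  intro x hx
  have hfx : f0' x ∈ LinearMap.ker (π.hom : (P.complex.X 0 : Type u) →ₗ[R] M) := by
    show π (f0' x) = 0
    rw [hf0]
    exact (Submodule.Quotient.mk_eq_zero I).mpr hx
  rw [← hex] at hfx
  obtain ⟨y, hy⟩ := hfx
  show ψ (f0' x) - g (τ x) = g ⟨x, hx⟩
  rw [← hy, hψx y, ← map_sub]
  congr 1
  apply Subtype.ext
  show h0' (P.complex.d 1 0 y) - (h0' (f0' x) - x) = x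
  rw [hy]
  ring

end Aux

/-- Every `R`-module is `S`-strongly flat if and only if every `S`-weakly cotorsion
`R`-module is injective. -/
theorem all_stronglyFlat_iff_weaklyCotorsion_injective (S : Submonoid R) :
    (∀ (M : Type u) [AddCommGroup M] [Module R M], IsStronglyFlat R S M) ↔
    (∀ (C : Type u) [AddCommGroup C] [Module R C],
      IsWeaklyCotorsion R S C → Module.Injective R C) := by
  constructor
  · intro h C _ _ hWC
    apply Module.Baer.injective
    apply baer_of_cond R (ModuleCat.of R C)
    intro M P φ hφ
    refine (ext_one_vanish_iff R M (ModuleCat.of R C) P).mp ?_ φ hφ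
    exact h M C hWC
  · intro h M _ _ C _ _ hWC
    obtain ⟨P⟩ := (inferInstance : HasProjectiveResolution (ModuleCat.of R M)).out
    refine (ext_one_vanish_iff R (ModuleCat.of R M) (ModuleCat.of R C) P).mpr ?_
    intro φ hφ
    exact cond_of_injective R (ModuleCat.of R C) (h C hWC) P φ hφ
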